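/- For every p ≥ 1 and all x, y ∈ [0,1]^p with x + y ≠ 0, if x ≠ y then Δ_DML1(x,y) > 0 and Δ_DML2(x,y) > 0 (positivity of the Dice semimetric losses). -/

import Mathlib

open Finset

/-- The L¹ norm of a vector. -/
noncomputable def l1 {p : ℕ} (z : Fin p → ℝ) : ℝ := ∑ i, |z i|

/-- The first Dice semimetric loss. -/
noncomputable def DML1 {p : ℕ} (x y : Fin p → ℝ) : ℝ :=
  1 - (l1 (x + y) - l1 (x - y)) / l1 (x + y)

/-- The second Dice semimetric loss. -/
noncomputable def DML2 {p : ℕ} (x y : Fin p → ℝ) : ℝ :=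
  1 - 2 * l1 (x * y) / (2 * l1 (x * y) + l1 (x - y))

/-- Positivity of the Dice semimetric losses. -/
theorem dml_positivity {p : ℕ} (hp : 1 ≤ p) (x y : Fin p → ℝ)
    (hx : ∀ i, 0 ≤ x i ∧ x i ≤ 1) (hy : ∀ i, 0 ≤ y i ∧ y i ≤ 1)
    (hxy0 : x + y ≠ 0) (hne : x ≠ y) :
    0 < DML1 x y ∧ 0 < DML2 x y := by
  have hA : 0 < l1 (x + y) := by
    obtain ⟨i, hi⟩ := Function.ne_iff.mp hxy0
    have : 0 < |(x + y) i| := abs_pos.mpr hi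
    have hle : |(x + y) i| ≤ l1 (x + y) :=
      Finset.single_le_sum (f := fun j => |(x + y) j|) (fun j _ => abs_nonneg _)
        (Finset.mem_univ i)
    linarith
  have hB : 0 < l1 (x - y) := by
    obtain ⟨i, hi⟩ := Function.ne_iff.mp hne
    have : 0 < |(x - y) i| := by
      simp only [Pi.sub_apply]
      exact abs_pos.mpr (sub_ne_zero.mpr hi)
    have hle : |(x - y) i| ≤ l1 (x - y) :=
      Finset.single_le_sum (f := fun j => |(x - y) j|) (fun j _ => abs_nonneg _)
        (Finset.mem_univ i)
    linarith
  have hC : 0 ≤ l1 (x * y) := Finset.sum_nonneg fun j _ => abs_nonneg _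
  constructor
  · have : DML1 x y = l1 (x - y) / l1 (x + y) := by
      unfold DML1
      field_simp
      ring
    rw [this]
    positivity
  · have : DML2 x y = l1 (x - y) / (2 * l1 (x * y) + l1 (x - y)) := by
      unfold DML2
      have hd : 2 * l1 (x * y) + l1 (x - y) ≠ 0 := by positivity
      field_simp
      ring
    rw [this]
    positivity
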